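/- Let κ > 0, k ∈ ℝ² with |k| = κ, and let θ be a unit vector with θ ≠ k/κ. Let ψ₁, ψ̃₁ : (0,∞) → ℂ and f, f̃ : ℕ → ℂ be such that for every N ∈ ℕ: ψ₁(s) − √(2/(πκ s)) e^{i(κs − π/4)} Σ_{j=0}^{N} f_j s^{−j} = O(s^{−N − 3/2}) and ψ̃₁(s) − √(2/(πκ s)) e^{i(κs − π/4)} Σ_{j=0}^{N} f̃_j s^{−j} = O(s^{−N − 3/2}) as s → ∞. If |e^{i s (k·θ)} + ψ₁(s)|² = |e^{i s (k·θ)} + ψ̃₁(s)|² for all s > 0, then f_j = f̃_j for every j ∈ ℕ. -/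

import Mathlib

open Complex Filter Asymptotics RealInnerProductSpace Topology

noncomputable section

/-- The plane ℝ². -/
abbrev E2 := EuclideanSpace ℝ (Fin 2)

/-- The truncated far-field expansion
`√(2/(πκs)) e^{i(κs − π/4)} Σ_{j=0}^{N} f_j s^{−j}`. -/
def partialFar (κ : ℝ) (f : ℕ → ℂ) (N : ℕ) (s : ℝ) : ℂ :=
  (Real.sqrt (2 / (Real.pi * κ * s)) : ℂ) *
    Complex.exp (Complex.I * ((κ * s - Real.pi / 4 : ℝ) : ℂ)) *
    ∑ j ∈ Finset.range (N + 1), f j / (s : ℂ) ^ j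

lemma rpow_isBigO_rpow {a b : ℝ} (h : a ≤ b) :
    (fun s : ℝ => s ^ a) =O[atTop] (fun s : ℝ => s ^ b) := by
  apply IsBigO.of_bound 1
  filter_upwards [eventually_ge_atTop (1 : ℝ)] with s hs
  have hs0 : (0:ℝ) ≤ s := le_trans zero_le_one hs
  rw [Real.norm_eq_abs, Real.norm_eq_abs, _root_.abs_of_nonneg (Real.rpow_nonneg hs0 _),
    _root_.abs_of_nonneg (Real.rpow_nonneg hs0 _), one_mul]
  exact Real.rpow_le_rpow_of_exponent_le hs h

lemma conj_isBigO {f : ℝ → ℂ} {g : ℝ → ℝ} {l : Filter ℝ} (h : f =O[l] g) :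
    (fun s => (starRingEnd ℂ) (f s)) =O[l] g := by
  refine (Asymptotics.isBigO_of_le l (g := f) fun s => ?_).trans h
  simp

lemma re_isBigO {f : ℝ → ℂ} {g : ℝ → ℝ} {l : Filter ℝ} (h : f =O[l] g) :
    (fun s => (f s).re) =O[l] g := by
  refine (Asymptotics.isBigO_of_le l (g := f) fun s => ?_).trans h
  simpa using Complex.abs_re_le_norm (f s)

lemma sqrt_factor_eq {κ : ℝ} (hκ : 0 < κ) {s : ℝ} (hs : 0 < s) :
    Real.sqrt (2 / (Real.pi * κ * s)) = Real.sqrt (2 / (Real.pi * κ)) * s ^ (-(1:ℝ)/2) := by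
  have h1 : 2 / (Real.pi * κ * s) = (2 / (Real.pi * κ)) * s⁻¹ := by
    field_simp
  rw [h1, Real.sqrt_mul (by positivity), Real.sqrt_inv,
    show (Real.sqrt s)⁻¹ = s ^ (-(1:ℝ)/2) from by
      rw [Real.sqrt_eq_rpow, ← Real.rpow_neg hs.le]; norm_num]

lemma abs_exp_I_mul (x : ℝ) : ‖Complex.exp (Complex.I * (x : ℂ))‖ = 1 := by
  rw [mul_comm]; exact Complex.norm_exp_ofReal_mul_I x

lemma partialFar_isBigO (κ : ℝ) (hκ : 0 < κ) (f : ℕ → ℂ) (N : ℕ) :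
    (partialFar κ f N) =O[atTop] fun s : ℝ => s ^ (-(1:ℝ)/2) := by
  apply IsBigO.of_bound (Real.sqrt (2 / (Real.pi * κ)) * ∑ j ∈ Finset.range (N+1), ‖f j‖)
  filter_upwards [eventually_ge_atTop (1 : ℝ)] with s hs
  have hs0 : (0:ℝ) < s := lt_of_lt_of_le zero_lt_one hs
  have hsum : ‖∑ j ∈ Finset.range (N + 1), f j / (s : ℂ) ^ j‖
      ≤ ∑ j ∈ Finset.range (N+1), ‖f j‖ := by
    refine (norm_sum_le _ _).trans (Finset.sum_le_sum fun j _ => ?_)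
    rw [norm_div, norm_pow, Complex.norm_real, Real.norm_eq_abs, _root_.abs_of_nonneg hs0.le]
    exact div_le_self (norm_nonneg _) (one_le_pow₀ hs)
  have hnorm : ‖partialFar κ f N s‖
      = Real.sqrt (2 / (Real.pi * κ * s)) * ‖∑ j ∈ Finset.range (N + 1), f j / (s : ℂ) ^ j‖ := by
    rw [partialFar, norm_mul, norm_mul]
    have : ‖Complex.exp (Complex.I * ((κ * s - Real.pi / 4 : ℝ) : ℂ))‖ = 1 := abs_exp_I_mul _
    rw [this, mul_one, Complex.norm_real, Real.norm_eq_abs,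
      _root_.abs_of_nonneg (Real.sqrt_nonneg _)]
  rw [hnorm, sqrt_factor_eq hκ hs0, Real.norm_eq_abs,
    _root_.abs_of_nonneg (Real.rpow_nonneg hs0.le _)]
  calc Real.sqrt (2 / (Real.pi * κ)) * s ^ (-(1:ℝ)/2) *
        ‖∑ j ∈ Finset.range (N + 1), f j / (s : ℂ) ^ j‖
      ≤ Real.sqrt (2 / (Real.pi * κ)) * s ^ (-(1:ℝ)/2) * ∑ j ∈ Finset.range (N+1), ‖f j‖ := by
        apply mul_le_mul_of_nonneg_left hsum (by positivity)
    _ = Real.sqrt (2 / (Real.pi * κ)) * (∑ j ∈ Finset.range (N+1), ‖f j‖) * s ^ (-(1:ℝ)/2) := by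
        ring

lemma exp_two_pi_nat (n : ℕ) : Complex.exp (Complex.I * ((2 * Real.pi * n : ℝ) : ℂ)) = 1 := by
  have := Complex.exp_int_mul_two_pi_mul_I (n : ℤ)
  rw [show Complex.I * ((2 * Real.pi * n : ℝ) : ℂ)
      = ((n : ℤ) : ℂ) * (2 * (Real.pi:ℂ) * Complex.I) by push_cast; ring]
  exact this

lemma exp_pi_div_two' : Complex.exp (Complex.I * ((Real.pi / 2 : ℝ) : ℂ)) = Complex.I := by
  rw [mul_comm, Complex.exp_mul_I, ← Complex.ofReal_cos, ← Complex.ofReal_sin,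
    Real.cos_pi_div_two, Real.sin_pi_div_two]
  simp

lemma seq_limit {β : ℝ} (hβ : 0 < β) (g : ℂ)
    (h : Tendsto (fun s : ℝ => (Complex.exp (Complex.I * ((β * s - Real.pi / 4 : ℝ) : ℂ)) * g).re)
      atTop (𝓝 0)) : g = 0 := by
  have hnat : Tendsto (fun n : ℕ => (n : ℝ)) atTop atTop := tendsto_natCast_atTop_atTop
  have hlin : ∀ c : ℝ, Tendsto (fun n : ℕ => (c + 2 * Real.pi * n) / β) atTop atTop := by
    intro c
    exact (tendsto_atTop_add_const_left atTop c
      (hnat.const_mul_atTop Real.two_pi_pos)).atTop_div_const hβ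
  have h1 : Tendsto (fun n : ℕ =>
      (Complex.exp (Complex.I *
        ((β * ((Real.pi/4 + 2 * Real.pi * n) / β) - Real.pi / 4 : ℝ) : ℂ)) * g).re)
      atTop (𝓝 0) := h.comp (hlin (Real.pi/4))
  have e1 : ∀ n : ℕ,
      (Complex.exp (Complex.I *
        ((β * ((Real.pi/4 + 2 * Real.pi * n) / β) - Real.pi / 4 : ℝ) : ℂ)) * g).re = g.re := by
    intro n
    have harg : β * ((Real.pi/4 + 2 * Real.pi * n) / β) - Real.pi / 4 = 2 * Real.pi * n := by
      field_simp; ring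
    rw [harg, exp_two_pi_nat, one_mul]
  rw [funext e1] at h1
  have hre : g.re = 0 := tendsto_nhds_unique tendsto_const_nhds h1
  have h2 : Tendsto (fun n : ℕ =>
      (Complex.exp (Complex.I *
        ((β * ((3*Real.pi/4 + 2 * Real.pi * n) / β) - Real.pi / 4 : ℝ) : ℂ)) * g).re)
      atTop (𝓝 0) := h.comp (hlin (3*Real.pi/4))
  have e2 : ∀ n : ℕ,
      (Complex.exp (Complex.I *
        ((β * ((3*Real.pi/4 + 2 * Real.pi * n) / β) - Real.pi / 4 : ℝ) : ℂ)) * g).re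
      = -g.im := by
    intro n
    have harg : β * ((3*Real.pi/4 + 2 * Real.pi * n) / β) - Real.pi / 4
        = Real.pi/2 + 2 * Real.pi * n := by
      field_simp; ring
    rw [harg, show ((Real.pi/2 + 2 * Real.pi * n : ℝ) : ℂ)
        = ((Real.pi/2 : ℝ) : ℂ) + ((2*Real.pi*n : ℝ) : ℂ) by push_cast; ring,
      mul_add, Complex.exp_add, exp_pi_div_two', exp_two_pi_nat, mul_one]
    simp
  rw [funext e2] at h2
  have him : g.im = 0 := by
    have := tendsto_nhds_unique tendsto_const_nhds h2
    linarith [this]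
  exact Complex.ext hre him

lemma conj_exp_I_mul (x : ℝ) :
    (starRingEnd ℂ) (Complex.exp (Complex.I * (x : ℂ))) = Complex.exp (-(Complex.I * (x : ℂ))) := by
  rw [← Complex.exp_conj, map_mul, Complex.conj_I, Complex.conj_ofReal, neg_mul]

lemma key_phase (κ a : ℝ) (g : ℂ) (N : ℕ) (s : ℝ) :
    (Complex.exp (Complex.I * ((s * a : ℝ) : ℂ)) *
      (starRingEnd ℂ) ((Real.sqrt (2 / (Real.pi * κ * s)) : ℂ) *
        Complex.exp (Complex.I * ((κ * s - Real.pi / 4 : ℝ) : ℂ)) * (g / (s : ℂ) ^ N))).re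
    = Real.sqrt (2 / (Real.pi * κ * s)) * ((s ^ N : ℝ))⁻¹ *
      (Complex.exp (Complex.I * (((κ - a) * s - Real.pi / 4 : ℝ) : ℂ)) * g).re := by
  have hexp : Complex.exp (Complex.I * ((s * a : ℝ) : ℂ)) *
      Complex.exp (-(Complex.I * ((κ * s - Real.pi / 4 : ℝ) : ℂ)))
      = Complex.exp (-(Complex.I * (((κ - a) * s - Real.pi / 4 : ℝ) : ℂ))) := by
    rw [← Complex.exp_add]; congr 1; push_cast; ring
  have hmain : Complex.exp (Complex.I * ((s * a : ℝ) : ℂ)) *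
      (starRingEnd ℂ) ((Real.sqrt (2 / (Real.pi * κ * s)) : ℂ) *
        Complex.exp (Complex.I * ((κ * s - Real.pi / 4 : ℝ) : ℂ)) * (g / (s : ℂ) ^ N))
      = ((Real.sqrt (2 / (Real.pi * κ * s)) * ((s ^ N : ℝ))⁻¹ : ℝ) : ℂ) *
        (starRingEnd ℂ) (Complex.exp (Complex.I * (((κ - a) * s - Real.pi / 4 : ℝ) : ℂ)) * g) := by
    rw [map_mul, map_mul, map_mul, map_div₀, map_pow, Complex.conj_ofReal, Complex.conj_ofReal,
      conj_exp_I_mul, conj_exp_I_mul, ← hexp]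
    push_cast
    ring
  rw [hmain, Complex.re_ofReal_mul, Complex.conj_re]

/-- Determination of all far-field expansion coefficients from the intensity of the total
field on a single ray whose direction `θ` differs from the propagation direction `k/κ` of the
plane wave. -/
theorem farfield_coefficients_determined_by_intensity
    (κ : ℝ) (hκ : 0 < κ) (k θ : E2) (hk : ‖k‖ = κ) (hθ : ‖θ‖ = 1) (hθk : θ ≠ κ⁻¹ • k)
    (ψ₁ ψ₁' : ℝ → ℂ) (f f' : ℕ → ℂ)
    (hψ : ∀ N : ℕ, (fun s : ℝ => ψ₁ s - partialFar κ f N s) =O[atTop]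
      fun s : ℝ => s ^ (-(N : ℝ) - 3 / 2))
    (hψ' : ∀ N : ℕ, (fun s : ℝ => ψ₁' s - partialFar κ f' N s) =O[atTop]
      fun s : ℝ => s ^ (-(N : ℝ) - 3 / 2))
    (hI : ∀ s : ℝ, 0 < s →
      ‖Complex.exp (Complex.I * ((s * ⟪k, θ⟫ : ℝ) : ℂ)) + ψ₁ s‖ ^ 2 =
        ‖Complex.exp (Complex.I * ((s * ⟪k, θ⟫ : ℝ) : ℂ)) + ψ₁' s‖ ^ 2) :
    ∀ j : ℕ, f j = f' j := by
  set a : ℝ := ⟪k, θ⟫ with ha_def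
  -- a < κ
  have ha : a < κ := by
    have hle : a ≤ ‖k‖ * ‖θ‖ := real_inner_le_norm k θ
    rw [hk, hθ, mul_one] at hle
    refine lt_of_le_of_ne hle (fun heq => hθk ?_)
    have h2 : ‖θ‖ • k = ‖k‖ • θ := inner_eq_norm_mul_iff_real.mp (by rw [hk, hθ, mul_one]; exact heq)
    rw [hθ, hk, one_smul] at h2
    -- h2 : k = κ • θ
    rw [h2, smul_smul, inv_mul_cancel₀ (ne_of_gt hκ), one_smul]
  set β : ℝ := κ - a with hβ_def
  have hβ : 0 < β := sub_pos.mpr ha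
  -- plane-wave factor
  set e : ℝ → ℂ := fun s => Complex.exp (Complex.I * ((s * a : ℝ) : ℂ)) with he_def
  -- ψ₁ and ψ₁' are O(s^{-1/2})
  have hA : ψ₁ =O[atTop] fun s : ℝ => s ^ (-(1:ℝ)/2) := by
    have h1 := (hψ 0).trans (rpow_isBigO_rpow (b := -(1:ℝ)/2) (by push_cast; norm_num))
    have := h1.add (partialFar_isBigO κ hκ f 0)
    exact this.congr_left fun s => sub_add_cancel _ _
  have hA' : ψ₁' =O[atTop] fun s : ℝ => s ^ (-(1:ℝ)/2) := by
    have h1 := (hψ' 0).trans (rpow_isBigO_rpow (b := -(1:ℝ)/2) (by push_cast; norm_num))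
    have := h1.add (partialFar_isBigO κ hκ f' 0)
    exact this.congr_left fun s => sub_add_cancel _ _
  -- strong induction
  suffices H : ∀ N : ℕ, (∀ i, i < N → f i = f' i) → f N = f' N by
    intro j
    induction j using Nat.strong_induction_on with
    | _ j ih => exact H j ih
  intro N hlt
  set g : ℂ := f N - f' N with hg_def
  set M : ℝ → ℂ := fun s => (Real.sqrt (2 / (Real.pi * κ * s)) : ℂ) *
      Complex.exp (Complex.I * ((κ * s - Real.pi / 4 : ℝ) : ℂ)) * (g / (s : ℂ) ^ N) with hM_def
  set D : ℝ → ℂ := fun s => ψ₁ s - ψ₁' s with hD_def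
  -- difference of partial sums is M
  have hpFdiff : ∀ s : ℝ, partialFar κ f N s - partialFar κ f' N s = M s := by
    intro s
    have hsum : (∑ j ∈ Finset.range (N + 1), f j / (s : ℂ) ^ j)
        - (∑ j ∈ Finset.range (N + 1), f' j / (s : ℂ) ^ j) = g / (s : ℂ) ^ N := by
      rw [← Finset.sum_sub_distrib]
      rw [Finset.sum_eq_single_of_mem N (Finset.self_mem_range_succ N)]
      · rw [div_sub_div_same]
      · intro j hj hne
        have hjN : j < N := lt_of_le_of_ne (Nat.lt_succ_iff.mp (Finset.mem_range.mp hj)) hne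
        rw [hlt j hjN, sub_self]
    rw [partialFar, partialFar, hM_def, ← mul_sub, hsum]
  -- D - M is O(s^{-N-3/2})
  have hD32 : (fun s : ℝ => D s - M s) =O[atTop] fun s : ℝ => s ^ (-(N:ℝ) - 3/2) := by
    refine ((hψ N).sub (hψ' N)).congr_left fun s => ?_
    rw [hD_def]
    simp only
    rw [← hpFdiff s]
    ring
  -- M is O(s^{-N-1/2})
  have hM : M =O[atTop] fun s : ℝ => s ^ (-(N:ℝ) - 1/2) := by
    apply IsBigO.of_bound (Real.sqrt (2 / (Real.pi * κ)) * ‖g‖)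
    filter_upwards [eventually_ge_atTop (1 : ℝ)] with s hs
    have hs0 : (0:ℝ) < s := lt_of_lt_of_le zero_lt_one hs
    have hnorm : ‖M s‖ = Real.sqrt (2 / (Real.pi * κ * s)) * (‖g‖ / s ^ N) := by
      rw [hM_def]
      simp only
      have hexp1 : ‖Complex.exp (Complex.I * ((κ * s - Real.pi / 4 : ℝ) : ℂ))‖ = 1 :=
        abs_exp_I_mul _
      rw [norm_mul, norm_mul, hexp1, mul_one, norm_div, norm_pow, Complex.norm_real,
        Real.norm_eq_abs, _root_.abs_of_nonneg (Real.sqrt_nonneg _), Complex.norm_real,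
        Real.norm_eq_abs, _root_.abs_of_nonneg hs0.le]
    rw [hnorm, sqrt_factor_eq hκ hs0]
    have hrpow : s ^ (-(N:ℝ) - 1/2) = s ^ (-(1:ℝ)/2) * (s ^ N)⁻¹ := by
      rw [← Real.rpow_natCast s N, ← Real.rpow_neg hs0.le, ← Real.rpow_add hs0]
      congr 1; ring
    rw [Real.norm_eq_abs, _root_.abs_of_nonneg (Real.rpow_nonneg hs0.le _), hrpow]
    rw [div_eq_mul_inv]
    ring_nf
    exact le_refl _
  -- D is O(s^{-N-1/2})
  have hDsmall : D =O[atTop] fun s : ℝ => s ^ (-(N:ℝ) - 1/2) := by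
    have h1 := (hD32.trans (rpow_isBigO_rpow (b := -(N:ℝ) - 1/2) (by linarith))).add hM
    exact h1.congr_left fun s => sub_add_cancel _ _
  -- intensity identity
  have hQ_eq : ∀ s : ℝ, 0 < s →
      2 * (e s * (starRingEnd ℂ) (D s)).re
      = Complex.normSq (ψ₁' s) - Complex.normSq (ψ₁ s) := by
    intro s hs
    have h1 : Complex.normSq (e s + ψ₁ s) = Complex.normSq (e s + ψ₁' s) := by
      rw [← Complex.sq_norm, ← Complex.sq_norm]
      exact hI s hs
    rw [Complex.normSq_add, Complex.normSq_add] at h1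
    have h2 : e s * (starRingEnd ℂ) (D s)
        = e s * (starRingEnd ℂ) (ψ₁ s) - e s * (starRingEnd ℂ) (ψ₁' s) := by
      rw [hD_def]; simp only [map_sub]; ring
    rw [h2, Complex.sub_re]
    linarith
  -- normSq difference identity
  have key2 : ∀ z w : ℂ, Complex.normSq z - Complex.normSq w
      = ((starRingEnd ℂ) (z + w) * (z - w)).re := by
    intro z w
    simp [Complex.normSq_apply, Complex.mul_re, Complex.add_re, Complex.add_im,
      Complex.sub_re, Complex.sub_im]
    ring
  -- the normSq difference is O(s^{-N-1})
  have hsub : (fun s : ℝ => ψ₁' s - ψ₁ s) =O[atTop] fun s : ℝ => s ^ (-(N:ℝ) - 1/2) := by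
    have := hDsmall.neg_left
    refine this.congr_left fun s => ?_
    rw [hD_def]; simp only; ring
  have hprod : (fun s : ℝ => (starRingEnd ℂ) (ψ₁' s + ψ₁ s) * (ψ₁' s - ψ₁ s)) =O[atTop]
      fun s : ℝ => s ^ (-(1:ℝ)/2) * s ^ (-(N:ℝ) - 1/2) :=
    (conj_isBigO (hA'.add hA)).mul hsub
  have hprod' : (fun s : ℝ => (starRingEnd ℂ) (ψ₁' s + ψ₁ s) * (ψ₁' s - ψ₁ s)) =O[atTop]
      fun s : ℝ => s ^ (-(N:ℝ) - 1) := by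
    refine hprod.congr' EventuallyEq.rfl ?_
    filter_upwards [eventually_gt_atTop (0 : ℝ)] with s hs
    rw [← Real.rpow_add hs]
    congr 1; ring
  have hZ : (fun s : ℝ => Complex.normSq (ψ₁' s) - Complex.normSq (ψ₁ s)) =O[atTop]
      fun s : ℝ => s ^ (-(N:ℝ) - 1) :=
    (re_isBigO hprod').congr_left fun s => (key2 _ _).symm
  -- Q is O(s^{-N-1})
  have hQbig : (fun s : ℝ => (e s * (starRingEnd ℂ) (D s)).re) =O[atTop]
      fun s : ℝ => s ^ (-(N:ℝ) - 1) := by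
    refine (hZ.const_mul_left (1/2)).congr' ?_ EventuallyEq.rfl
    filter_upwards [eventually_gt_atTop (0 : ℝ)] with s hs
    have := hQ_eq s hs
    linarith
  -- the small remainder term
  have heO : e =O[atTop] fun _ : ℝ => (1 : ℝ) := by
    apply IsBigO.of_bound 1
    filter_upwards with s
    rw [he_def]
    simp only
    have : ‖Complex.exp (Complex.I * ((s * a : ℝ) : ℂ))‖ = 1 := abs_exp_I_mul _
    rw [this]
    norm_num
  have hsmall2 : (fun s : ℝ => (e s * (starRingEnd ℂ) (D s - M s)).re) =O[atTop]
      fun s : ℝ => s ^ (-(N:ℝ) - 1) := by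
    have h1 : (fun s : ℝ => e s * (starRingEnd ℂ) (D s - M s)) =O[atTop]
        fun s : ℝ => (1 : ℝ) * s ^ (-(N:ℝ) - 3/2) := heO.mul (conj_isBigO hD32)
    have h2 := (re_isBigO h1).congr' EventuallyEq.rfl
      (by filter_upwards with s; rw [one_mul] : (fun s : ℝ => (1:ℝ) * s ^ (-(N:ℝ) - 3/2)) =ᶠ[atTop]
        fun s : ℝ => s ^ (-(N:ℝ) - 3/2))
    exact h2.trans (rpow_isBigO_rpow (b := -(N:ℝ) - 1) (by linarith))
  -- the main oscillating term is O(s^{-N-1})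
  have hL : (fun s : ℝ => (e s * (starRingEnd ℂ) (M s)).re) =O[atTop]
      fun s : ℝ => s ^ (-(N:ℝ) - 1) := by
    refine (hQbig.sub hsmall2).congr_left fun s => ?_
    have h2 : e s * (starRingEnd ℂ) (M s)
        = e s * (starRingEnd ℂ) (D s) - e s * (starRingEnd ℂ) (D s - M s) := by
      simp only [map_sub]; ring
    rw [h2, Complex.sub_re]
  -- the weight function
  have hW : (fun s : ℝ => (Real.sqrt (2 / (Real.pi * κ * s)))⁻¹ * (s ^ N : ℝ)) =O[atTop]
      fun s : ℝ => s ^ ((N:ℝ) + 1/2) := by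
    apply IsBigO.of_bound (Real.sqrt (2 / (Real.pi * κ)))⁻¹
    filter_upwards [eventually_ge_atTop (1 : ℝ)] with s hs
    have hs0 : (0:ℝ) < s := lt_of_lt_of_le zero_lt_one hs
    have hc0 : (0:ℝ) < Real.sqrt (2 / (Real.pi * κ)) :=
      Real.sqrt_pos.mpr (by positivity)
    have heq : (Real.sqrt (2 / (Real.pi * κ * s)))⁻¹ * (s ^ N : ℝ)
        = (Real.sqrt (2 / (Real.pi * κ)))⁻¹ * s ^ ((N:ℝ) + 1/2) := by
      rw [sqrt_factor_eq hκ hs0, mul_inv]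
      rw [show s ^ ((N:ℝ) + 1/2) = s ^ (N:ℝ) * (s ^ (-(1:ℝ)/2))⁻¹ by
        rw [← Real.rpow_neg hs0.le, ← Real.rpow_add hs0]; congr 1; ring]
      rw [Real.rpow_natCast]
      ring
    rw [heq, Real.norm_eq_abs, Real.norm_eq_abs,
      _root_.abs_of_nonneg (by positivity : (0:ℝ) ≤ (Real.sqrt (2 / (Real.pi * κ)))⁻¹ * s ^ ((N:ℝ) + 1/2)),
      _root_.abs_of_nonneg (Real.rpow_nonneg hs0.le _)]
  -- F is O(s^{-1/2})
  set F : ℝ → ℝ := fun s => (Complex.exp (Complex.I * ((β * s - Real.pi / 4 : ℝ) : ℂ)) * g).re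
    with hF_def
  have hF : F =O[atTop] fun s : ℝ => s ^ (-(1:ℝ)/2) := by
    have hLW := hL.mul hW
    refine hLW.congr' ?_ ?_
    · filter_upwards [eventually_ge_atTop (1 : ℝ)] with s hs
      have hs0 : (0:ℝ) < s := lt_of_lt_of_le zero_lt_one hs
      have hkey := key_phase κ a g N s
      have hsqrt : (0:ℝ) < Real.sqrt (2 / (Real.pi * κ * s)) :=
        Real.sqrt_pos.mpr (by positivity)
      have hsN : (0:ℝ) < (s ^ N : ℝ) := pow_pos hs0 N
      rw [he_def, hM_def, hF_def]
      simp only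
      rw [hkey]
      rw [show β = κ - a from hβ_def]
      field_simp
    · filter_upwards [eventually_gt_atTop (0 : ℝ)] with s hs
      rw [← Real.rpow_add hs]
      congr 1; ring
  -- F tends to 0, hence g = 0
  have hT : Tendsto F atTop (𝓝 0) := by
    refine hF.trans_tendsto ?_
    have := tendsto_rpow_neg_atTop (by norm_num : (0:ℝ) < 1/2)
    simpa [neg_div] using this
  have hg0 : g = 0 := seq_limit hβ g (by rw [hF_def] at hT; exact hT)
  rw [hg_def] at hg0
  exact sub_eq_zero.mp hg0
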